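/- Assume uniform boundedness with constant B. If α_min < (L−1)·π_min/π_max, then every surrogate-feasible query plan r∈ℛ̄(α) satisfies C(r) ≥ (c_min/B) · log( (L−1)·π_min / (π_max·α_min) ), where c_min=min_m c_m, π_min=min_y π(y), and π_max=max_y π(y). -/

import Mathlib

open Finset Set
open scoped Classical BigOperators ENNReal

namespace MultiLLM

noncomputable section

variable {L K : ℕ}

/-- The observation space for a query plan `r`: model `m` is queried `r m` times. -/
abbrev Obs (𝒳 : Fin K → Type) (r : Fin K → ℕ) := ∀ m : Fin K, Fin (r m) → 𝒳 m

variable {𝒳 : Fin K → Type} [∀ m, Fintype (𝒳 m)]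

/-- Conditional likelihood of an observation vector given `Y = y`. -/
def prodLik (p : ∀ m : Fin K, 𝒳 m → Fin L → ℝ) (r : Fin K → ℕ) (y : Fin L)
    (x : Obs 𝒳 r) : ℝ :=
  ∏ m, ∏ t, p m (x m t) y

/-- MAP score of label `y` at observation `x`. -/
def score (π : Fin L → ℝ) (p : ∀ m : Fin K, 𝒳 m → Fin L → ℝ) (r : Fin K → ℕ)
    (y : Fin L) (x : Obs 𝒳 r) : ℝ :=
  π y * prodLik p r y x

/-- Conditional probability of an event `E` given `Y = y`. -/
def condProb (p : ∀ m : Fin K, 𝒳 m → Fin L → ℝ) (r : Fin K → ℕ) (y : Fin L)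
    (E : Set (Obs 𝒳 r)) : ℝ :=
  ∑ x : Obs 𝒳 r, E.indicator (prodLik p r y) x

/-- `Yhat` is a MAP estimator for plan `r`. -/
def IsMAP (π : Fin L → ℝ) (p : ∀ m : Fin K, 𝒳 m → Fin L → ℝ) (r : Fin K → ℕ)
    (Yhat : Obs 𝒳 r → Fin L) : Prop :=
  ∀ x : Obs 𝒳 r, ∀ y : Fin L, score π p r y x ≤ score π p r (Yhat x) x

/-- Statewise error probability of estimator `Yhat` when the truth is `y`. -/
def Pe (p : ∀ m : Fin K, 𝒳 m → Fin L → ℝ) (r : Fin K → ℕ) (y : Fin L)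
    (Yhat : Obs 𝒳 r → Fin L) : ℝ :=
  condProb p r y {x | Yhat x ≠ y}

/-- Log-likelihood difference between competing label `y'` and true label `y`. -/
def LLdiff (π : Fin L → ℝ) (p : ∀ m : Fin K, 𝒳 m → Fin L → ℝ) (r : Fin K → ℕ)
    (y y' : Fin L) (x : Obs 𝒳 r) : ℝ :=
  Real.log (π y' / π y) + ∑ m, ∑ t, Real.log (p m (x m t) y' / p m (x m t) y)

/-- Chernoff affinity factor `M_m^{(y,y')}(s)`. -/
def chernoffM (p : ∀ m : Fin K, 𝒳 m → Fin L → ℝ) (m : Fin K) (y y' : Fin L)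
    (s : ℝ) : ℝ :=
  ∑ x : 𝒳 m, p m x y ^ (1 - s) * p m x y' ^ s

/-- Pairwise Chernoff proxy `P̄_{y,y'}(r; s)`. -/
def proxy (π : Fin L → ℝ) (p : ∀ m : Fin K, 𝒳 m → Fin L → ℝ) (r : Fin K → ℕ)
    (y y' : Fin L) (s : ℝ) : ℝ :=
  (π y' / π y) ^ s * ∏ m, chernoffM p m y y' s ^ r m

/-- Optimized pairwise Chernoff proxy `P̄_{y,y'}(r) = min_{s ∈ [0,1]} P̄_{y,y'}(r; s)`. -/
def proxyOpt (π : Fin L → ℝ) (p : ∀ m : Fin K, 𝒳 m → Fin L → ℝ) (r : Fin K → ℕ)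
    (y y' : Fin L) : ℝ :=
  sInf ((fun s => proxy π p r y y' s) '' Set.Icc (0 : ℝ) 1)

/-- Surrogate statewise error bound `P̄_e(y; r)`. -/
def PeBar (π : Fin L → ℝ) (p : ∀ m : Fin K, 𝒳 m → Fin L → ℝ) (r : Fin K → ℕ)
    (y : Fin L) : ℝ :=
  ∑ y' ∈ Finset.univ.filter (fun y' => y' ≠ y), proxyOpt π p r y y'

/-- Total cost of a query plan. -/
def cost (c : Fin K → ℝ) (r : Fin K → ℕ) : ℝ := ∑ m, c m * (r m : ℝ)

/-- Effective sample size `n_{y,y'}(r)`: total queries to models distinguishing `y,y'`. -/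
def effSample (p : ∀ m : Fin K, 𝒳 m → Fin L → ℝ) (r : Fin K → ℕ) (y y' : Fin L) : ℕ :=
  ∑ m ∈ Finset.univ.filter (fun m => (fun x => p m x y) ≠ (fun x => p m x y')), r m

/-- Tilted per-symbol distribution `q_m^{(y,y')}(x; s)`. -/
def qTilt (p : ∀ m : Fin K, 𝒳 m → Fin L → ℝ) (m : Fin K) (y y' : Fin L) (s : ℝ)
    (x : 𝒳 m) : ℝ :=
  p m x y ^ (1 - s) * p m x y' ^ s / chernoffM p m y y' s

/-- Weight of an observation under the tilted product measure `ℚ_{y,y',r,s}`. -/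
def Qweight (p : ∀ m : Fin K, 𝒳 m → Fin L → ℝ) (r : Fin K → ℕ) (y y' : Fin L)
    (s : ℝ) (x : Obs 𝒳 r) : ℝ :=
  ∏ m, ∏ t, qTilt p m y y' s (x m t)

/-- Expectation under the tilted product measure `ℚ_{y,y',r,s}`. -/
def Qexp (p : ∀ m : Fin K, 𝒳 m → Fin L → ℝ) (r : Fin K → ℕ) (y y' : Fin L)
    (s : ℝ) (f : Obs 𝒳 r → ℝ) : ℝ :=
  ∑ x : Obs 𝒳 r, Qweight p r y y' s x * f x

/-- Probability of an event under the tilted product measure `ℚ_{y,y',r,s}`. -/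
def Qprob (p : ∀ m : Fin K, 𝒳 m → Fin L → ℝ) (r : Fin K → ℕ) (y y' : Fin L)
    (s : ℝ) (E : Set (Obs 𝒳 r)) : ℝ :=
  ∑ x : Obs 𝒳 r, E.indicator (Qweight p r y y' s) x

/-- Variance under the tilted product measure `ℚ_{y,y',r,s}`. -/
def Qvar (p : ∀ m : Fin K, 𝒳 m → Fin L → ℝ) (r : Fin K → ℕ) (y y' : Fin L)
    (s : ℝ) (f : Obs 𝒳 r → ℝ) : ℝ :=
  Qexp p r y y' s (fun x => (f x - Qexp p r y y' s f) ^ 2)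

/-- True feasible set `ℛ(α)` (with MAP estimator family `Yhat`). -/
def RtrueSet (p : ∀ m : Fin K, 𝒳 m → Fin L → ℝ)
    (Yhat : ∀ r : Fin K → ℕ, Obs 𝒳 r → Fin L) (α : Fin L → ℝ) : Set (Fin K → ℕ) :=
  {r | ∀ y, Pe p r y (Yhat r) ≤ α y}

/-- Surrogate feasible set `ℛ̄(α)`. -/
def RbarSet (π : Fin L → ℝ) (p : ∀ m : Fin K, 𝒳 m → Fin L → ℝ)
    (α : Fin L → ℝ) : Set (Fin K → ℕ) :=
  {r | ∀ y, PeBar π p r y ≤ α y}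

/-- True optimal cost `OPT(α)` (with `+∞` for the empty feasible set). -/
def OPTtrue (p : ∀ m : Fin K, 𝒳 m → Fin L → ℝ)
    (Yhat : ∀ r : Fin K → ℕ, Obs 𝒳 r → Fin L) (c : Fin K → ℝ) (α : Fin L → ℝ) : ℝ≥0∞ :=
  ⨅ r ∈ RtrueSet p Yhat α, ENNReal.ofReal (cost c r)

/-- Surrogate optimal cost `OPT̄(α)` (with `+∞` for the empty feasible set). -/
def OPTbar (π : Fin L → ℝ) (p : ∀ m : Fin K, 𝒳 m → Fin L → ℝ)
    (c : Fin K → ℝ) (α : Fin L → ℝ) : ℝ≥0∞ :=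
  ⨅ r ∈ RbarSet π p α, ENNReal.ofReal (cost c r)


/-- Cost lower bound.
Under uniform boundedness with constant `B`, if `α_min < (L-1)·π_min/π_max`
then every surrogate-feasible plan `r ∈ ℛ̄(α)` satisfies
`C(r) ≥ (c_min/B) · log((L-1)·π_min/(π_max·α_min))`. -/
theorem cost_lower_bound
    (hL : 2 ≤ L)
    (π : Fin L → ℝ) (p : ∀ m : Fin K, 𝒳 m → Fin L → ℝ)
    (hπ : ∀ y, 0 < π y) (hπ1 : ∑ y, π y = 1)
    (hp : ∀ (m : Fin K) (x : 𝒳 m) (y : Fin L), 0 < p m x y)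
    (hp1 : ∀ (m : Fin K) (y : Fin L), ∑ x : 𝒳 m, p m x y = 1)
    (B : ℝ)
    (hB : ∀ (m : Fin K) (y y' : Fin L), y ≠ y' →
      ∀ x : 𝒳 m, |Real.log (p m x y' / p m x y)| ≤ B)
    (c : Fin K → ℝ) (hc : ∀ m, 0 < c m)
    (cmin : ℝ) (hcmin : IsLeast (Set.range c) cmin)
    (πmax : ℝ) (hπmax : IsGreatest (Set.range π) πmax)
    (πmin : ℝ) (hπmin : IsLeast (Set.range π) πmin)
    (α : Fin L → ℝ) (hα : ∀ y, α y ∈ Set.Ioo (0 : ℝ) 1)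
    (amin : ℝ) (hamin : IsLeast (Set.range α) amin)
    (hsmall : amin < ((L : ℝ) - 1) * πmin / πmax) :
    ∀ r ∈ RbarSet π p α,
      cmin / B * Real.log (((L : ℝ) - 1) * πmin / (πmax * amin)) ≤ cost c r := by
  intro r hr
  -- positivity facts
  obtain ⟨y0, hy0⟩ := hamin.1
  have hπmin_pos : 0 < πmin := by
    obtain ⟨y, hy⟩ := hπmin.1; rw [← hy]; exact hπ y
  have hπmax_pos : 0 < πmax := by
    obtain ⟨y, hy⟩ := hπmax.1; rw [← hy]; exact hπ y
  have hamin_pos : 0 < amin := by rw [← hy0]; exact (hα y0).1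
  have hcmin_pos : 0 < cmin := by
    obtain ⟨m, hm⟩ := hcmin.1; rw [← hm]; exact hc m
  have hL1 : (1 : ℝ) ≤ (L : ℝ) - 1 := by
    have : (2 : ℝ) ≤ (L : ℝ) := by exact_mod_cast hL
    linarith
  have hL1pos : (0 : ℝ) < (L : ℝ) - 1 := by linarith
  have hXgt1 : 1 < ((L : ℝ) - 1) * πmin / (πmax * amin) := by
    rw [lt_div_iff₀ (by positivity)]
    have := (lt_div_iff₀ hπmax_pos).1 hsmall
    nlinarith
  have hlogX_pos : 0 < Real.log (((L : ℝ) - 1) * πmin / (πmax * amin)) :=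
    Real.log_pos hXgt1
  have hcost_nonneg : 0 ≤ cost c r := by
    apply Finset.sum_nonneg
    intro m _
    exact mul_nonneg (hc m).le (Nat.cast_nonneg _)
  rcases le_or_gt B 0 with hB0 | hBpos
  · -- B ≤ 0 : LHS is nonpositive
    have : cmin / B ≤ 0 := div_nonpos_of_nonneg_of_nonpos hcmin_pos.le hB0
    calc cmin / B * Real.log (((L : ℝ) - 1) * πmin / (πmax * amin))
        ≤ 0 := mul_nonpos_of_nonpos_of_nonneg this hlogX_pos.le
      _ ≤ cost c r := hcost_nonneg
  · -- B > 0 : main case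
    set N : ℕ := ∑ m, r m with hN
    set E : ℝ := Real.exp (-B) with hE
    have hE_pos : 0 < E := Real.exp_pos _
    have hE_le_one : E ≤ 1 := Real.exp_le_one_iff.2 (by linarith)
    set u : ℝ := πmin / πmax with hu
    have hu_pos : 0 < u := div_pos hπmin_pos hπmax_pos
    have hu_le_one : u ≤ 1 := by
      rw [hu, div_le_one hπmax_pos]
      obtain ⟨y, hy⟩ := hπmin.1
      calc πmin = π y := hy.symm
        _ ≤ πmax := hπmax.2 ⟨y, rfl⟩
    -- lower bound on each Chernoff factor
    have hM : ∀ (m : Fin K) (s : ℝ), s ∈ Set.Icc (0:ℝ) 1 → ∀ y y' : Fin L, y' ≠ y →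
        E ≤ chernoffM p m y y' s := by
      intro m s hs y y' hne
      have hbd : ∀ x : 𝒳 m, E * p m x y ≤ p m x y ^ (1 - s) * p m x y' ^ s := by
        intro x
        have hpy := hp m x y
        have hpy' := hp m x y'
        have hratio : E ≤ p m x y' / p m x y := by
          have h1 := (abs_le.1 (hB m y y' (Ne.symm hne) x)).1
          have := Real.exp_le_exp.2 h1
          rwa [Real.exp_log (div_pos hpy' hpy)] at this
        have hEs : E ≤ (p m x y' / p m x y) ^ s := by
          calc E = E ^ (1 : ℝ) := (Real.rpow_one E).symm
            _ ≤ E ^ s := Real.rpow_le_rpow_of_exponent_ge hE_pos hE_le_one hs.2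
            _ ≤ (p m x y' / p m x y) ^ s :=
                Real.rpow_le_rpow hE_pos.le hratio hs.1
        have hrw : p m x y ^ (1 - s) * p m x y' ^ s
            = p m x y * (p m x y' / p m x y) ^ s := by
          rw [Real.div_rpow hpy'.le hpy.le, Real.rpow_sub hpy, Real.rpow_one]
          ring
        rw [hrw]
        calc E * p m x y = p m x y * E := mul_comm _ _
          _ ≤ p m x y * (p m x y' / p m x y) ^ s :=
              mul_le_mul_of_nonneg_left hEs hpy.le
      calc E = E * ∑ x : 𝒳 m, p m x y := by rw [hp1 m y, mul_one]
        _ = ∑ x : 𝒳 m, E * p m x y := by rw [Finset.mul_sum]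
        _ ≤ ∑ x : 𝒳 m, p m x y ^ (1 - s) * p m x y' ^ s :=
            Finset.sum_le_sum fun x _ => hbd x
        _ = chernoffM p m y y' s := rfl
    -- lower bound on the proxy
    have hproxy : ∀ (s : ℝ), s ∈ Set.Icc (0:ℝ) 1 → ∀ y y' : Fin L, y' ≠ y →
        u * E ^ N ≤ proxy π p r y y' s := by
      intro s hs y y' hne
      have hry_pos : 0 < π y' / π y := div_pos (hπ y') (hπ y)
      have hpref : u ≤ (π y' / π y) ^ s := by
        have hry : u ≤ π y' / π y :=
          div_le_div₀ (hπ y').le (hπmin.2 ⟨y', rfl⟩) (hπ y) (hπmax.2 ⟨y, rfl⟩)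
        calc u = u ^ (1 : ℝ) := (Real.rpow_one u).symm
          _ ≤ u ^ s := Real.rpow_le_rpow_of_exponent_ge hu_pos hu_le_one hs.2
          _ ≤ (π y' / π y) ^ s := Real.rpow_le_rpow hu_pos.le hry hs.1
      have hprod : E ^ N ≤ ∏ m, chernoffM p m y y' s ^ r m := by
        calc E ^ N = ∏ m, E ^ r m := (Finset.prod_pow_eq_pow_sum _ _ _).symm
          _ ≤ ∏ m, chernoffM p m y y' s ^ r m := by
              apply Finset.prod_le_prod
              · intro m _; positivity
              · intro m _; exact pow_le_pow_left₀ hE_pos.le (hM m s hs y y' hne) _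
      have hEN_nonneg : (0:ℝ) ≤ E ^ N := by positivity
      calc u * E ^ N ≤ (π y' / π y) ^ s * ∏ m, chernoffM p m y y' s ^ r m :=
            mul_le_mul hpref hprod hEN_nonneg (Real.rpow_nonneg hry_pos.le _)
        _ = proxy π p r y y' s := rfl
    -- lower bound on the optimized proxy
    have hopt : ∀ y y' : Fin L, y' ≠ y → u * E ^ N ≤ proxyOpt π p r y y' := by
      intro y y' hne
      apply le_csInf
      · exact (Set.nonempty_Icc.2 zero_le_one).image _
      · rintro b ⟨s, hs, rfl⟩
        exact hproxy s hs y y' hne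
    -- lower bound on PeBar at y0 (the minimizing label for α)
    have hcard : ((Finset.univ.filter (fun y' => y' ≠ y0)).card : ℝ) = (L : ℝ) - 1 := by
      rw [Finset.filter_ne', Finset.card_erase_of_mem (Finset.mem_univ _)]
      have : 1 ≤ L := by omega
      simp [Nat.cast_sub this]
    have hkey : ((L : ℝ) - 1) * (u * E ^ N) ≤ amin := by
      have h1 : ((L : ℝ) - 1) * (u * E ^ N) ≤ PeBar π p r y0 := by
        rw [← hcard]
        have := Finset.card_nsmul_le_sum (Finset.univ.filter (fun y' => y' ≠ y0))
          (fun y' => proxyOpt π p r y0 y') (u * E ^ N)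
          (fun y' hy' => hopt y0 y' (Finset.mem_filter.1 hy').2)
        simpa [nsmul_eq_mul, PeBar] using this
      calc ((L : ℝ) - 1) * (u * E ^ N) ≤ PeBar π p r y0 := h1
        _ ≤ α y0 := hr y0
        _ = amin := hy0
    -- turn this into log X ≤ B * N
    have hEN : E ^ N = Real.exp (-(B * N)) := by
      rw [hE, ← Real.exp_nat_mul]
      ring_nf
    have h1 : Real.exp (-(B * N)) * Real.exp (B * N) = 1 := by
      rw [← Real.exp_add]; simp
    have huπ : u * πmax = πmin := div_mul_cancel₀ _ hπmax_pos.ne'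
    have hXle : ((L : ℝ) - 1) * πmin / (πmax * amin) ≤ Real.exp (B * N) := by
      rw [div_le_iff₀ (by positivity)]
      have h2 : ((L : ℝ) - 1) * (u * Real.exp (-(B * N))) * (πmax * Real.exp (B * N))
          ≤ amin * (πmax * Real.exp (B * N)) := by
        apply mul_le_mul_of_nonneg_right _ (by positivity)
        rw [← hEN]; exact hkey
      calc ((L : ℝ) - 1) * πmin
          = ((L : ℝ) - 1) * (u * πmax) * (Real.exp (-(B * N)) * Real.exp (B * N)) := by
            rw [huπ, h1, mul_one]
        _ = ((L : ℝ) - 1) * (u * Real.exp (-(B * N))) * (πmax * Real.exp (B * N)) := by ring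
        _ ≤ amin * (πmax * Real.exp (B * N)) := h2
        _ = Real.exp (B * N) * (πmax * amin) := by ring
    have hlogle : Real.log (((L : ℝ) - 1) * πmin / (πmax * amin)) ≤ B * N := by
      calc Real.log (((L : ℝ) - 1) * πmin / (πmax * amin))
          ≤ Real.log (Real.exp (B * N)) :=
            Real.log_le_log (by positivity) hXle
        _ = B * N := Real.log_exp _
    -- conclude
    have hstep : cmin / B * Real.log (((L : ℝ) - 1) * πmin / (πmax * amin))
        ≤ cmin * N := by
      have := mul_le_mul_of_nonneg_left hlogle
        (div_nonneg hcmin_pos.le hBpos.le)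
      calc cmin / B * Real.log (((L : ℝ) - 1) * πmin / (πmax * amin))
          ≤ cmin / B * (B * N) := this
        _ = cmin * N := by field_simp
    have hcostN : cmin * (N : ℝ) ≤ cost c r := by
      have : cmin * (N : ℝ) = ∑ m, cmin * (r m : ℝ) := by
        rw [hN]; push_cast; rw [Finset.mul_sum]
      rw [this]
      apply Finset.sum_le_sum
      intro m _
      exact mul_le_mul_of_nonneg_right (hcmin.2 ⟨m, rfl⟩) (Nat.cast_nonneg _)
    exact hstep.trans hcostN

end

end MultiLLM
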